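/- Let G be a finite connected simple graph on n ≥ 2 vertices, and let G* be its double graph: the graph with vertex set V(G) × {0,1} in which (u,a) is adjacent to (v,b) if and only if u is adjacent to v in G. Then C^ξ(G*) = 4·C^ξ(G) − 2(n−1)·‖n−1‖_G, where ‖n−1‖_G is the number of vertices of G having degree n−1 (equivalently, eccentricity one). -/

import Mathlib

/-- The eccentricity of a vertex `v` in a finite graph `G`:
the maximum distance from `v` to any other vertex. -/
noncomputable def eccentricity {V : Type*} [Fintype V] (G : SimpleGraph V) (v : V) : ℕ :=
  Finset.univ.sup fun u => G.dist v u

/-- The connective eccentric index `C^ξ(G) = ∑_v deg(v)/ε(v)`, as a rational number. -/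
noncomputable def connEccIndex {V : Type*} [Fintype V] (G : SimpleGraph V) : ℚ :=
  letI := Classical.decRel G.Adj
  ∑ v : V, (G.degree v : ℚ) / (eccentricity G v)

/-- The number of vertices of `G` whose degree equals `k`. -/
noncomputable def numVerticesOfDegree {V : Type*} [Fintype V] (G : SimpleGraph V) (k : ℕ) : ℕ :=
  letI := Classical.decRel G.Adj
  (Finset.univ.filter fun v => G.degree v = k).card

/-- The double graph of `G`: vertex set `V(G) × {0,1}`, where `(u,a)` is adjacent to
`(v,b)` iff `u` is adjacent to `v` in `G`. -/
def doubleGraph {V : Type*} (G : SimpleGraph V) : SimpleGraph (V × Fin 2) where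
  Adj x y := G.Adj x.1 y.1
  symm := ⟨fun _ _ h => G.symm.symm _ _ h⟩
  loopless := ⟨fun x h => G.loopless.irrefl x.1 h⟩

section Aux

variable {V : Type*} (G : SimpleGraph V)

/-- Projection hom from the double graph to `G`. -/
def projHomDG : doubleGraph G →g G := ⟨Prod.fst, fun h => h⟩

/-- Inclusion hom of `G` into its double graph with constant label `b`. -/
def inclHomDG (b : Fin 2) : G →g doubleGraph G := ⟨fun v => (v, b), fun h => h⟩

lemma liftWalkDG {u v : V} (p : G.Walk u v) (hp : p.length ≠ 0) (a b : Fin 2) :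
    ∃ q : (doubleGraph G).Walk (u, a) (v, b), q.length = p.length := by
  cases p with
  | nil => simp at hp
  | @cons _ w _ h q =>
    refine ⟨SimpleGraph.Walk.cons (show (doubleGraph G).Adj (u, a) (w, b) from h)
      (q.map (inclHomDG G b)), ?_⟩
    simp
    exact congrArg (· + 1) (SimpleGraph.Walk.length_map _ q)

lemma dist_doubleGraph_ne (hconn : G.Connected) {u v : V} (huv : u ≠ v) (a b : Fin 2) :
    (doubleGraph G).dist (u, a) (v, b) = G.dist u v := by
  apply le_antisymm
  · obtain ⟨p, hp⟩ := hconn.exists_walk_length_eq_dist u v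
    have hlen : p.length ≠ 0 := by
      intro h0
      exact huv (SimpleGraph.Walk.eq_of_length_eq_zero h0)
    obtain ⟨q, hq⟩ := liftWalkDG G p hlen a b
    calc (doubleGraph G).dist (u, a) (v, b) ≤ q.length := SimpleGraph.dist_le q
      _ = G.dist u v := by rw [hq, hp]
  · have hd : (doubleGraph G).dist (u, a) (v, b) ≠ 0 := by
      have : (doubleGraph G).Reachable (u, a) (v, b) := by
        obtain ⟨p, hp⟩ := hconn.exists_walk_length_eq_dist u v
        have hlen : p.length ≠ 0 := fun h0 => huv (SimpleGraph.Walk.eq_of_length_eq_zero h0)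
        obtain ⟨q, _⟩ := liftWalkDG G p hlen a b
        exact ⟨q⟩
      intro hdz
      exact huv (Prod.ext_iff.mp ((SimpleGraph.Reachable.dist_eq_zero_iff this).mp hdz)).1
    obtain ⟨q, hq⟩ := SimpleGraph.exists_walk_of_dist_ne_zero hd
    calc G.dist u v ≤ (q.map (projHomDG G)).length := SimpleGraph.dist_le _
      _ = (doubleGraph G).dist (u, a) (v, b) := by rw [SimpleGraph.Walk.length_map, hq]

lemma exists_adj_of_connected [Fintype V] (hconn : G.Connected)
    (hV : 1 < Fintype.card V) (v : V) : ∃ w, G.Adj v w := by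
  have : Nontrivial V := Fintype.one_lt_card_iff_nontrivial.mp hV
  obtain ⟨u, hu⟩ := exists_ne v
  obtain ⟨p⟩ := hconn.preconnected v u
  cases p with
  | nil => exact absurd rfl hu
  | cons h _ => exact ⟨_, h⟩

lemma dist_doubleGraph_self [Fintype V] (hconn : G.Connected) (hV : 1 < Fintype.card V)
    (v : V) {a b : Fin 2} (hab : a ≠ b) :
    (doubleGraph G).dist (v, a) (v, b) = 2 := by
  obtain ⟨w, hw⟩ := exists_adj_of_connected G hconn hV v
  have hle : (doubleGraph G).dist (v, a) (v, b) ≤ 2 := by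
    have := SimpleGraph.dist_le
      (SimpleGraph.Walk.cons (show (doubleGraph G).Adj (v, a) (w, a) from hw)
        (SimpleGraph.Walk.cons (show (doubleGraph G).Adj (w, a) (v, b) from hw.symm)
          SimpleGraph.Walk.nil))
    simpa using this
  have hne : ((v, a) : V × Fin 2) ≠ (v, b) := by simp [hab]
  have h0 : (doubleGraph G).dist (v, a) (v, b) ≠ 0 := by
    have hr : (doubleGraph G).Reachable (v, a) (v, b) :=
      ⟨SimpleGraph.Walk.cons (show (doubleGraph G).Adj (v, a) (w, a) from hw)
        (SimpleGraph.Walk.cons (show (doubleGraph G).Adj (w, a) (v, b) from hw.symm)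
          SimpleGraph.Walk.nil)⟩
    intro hdz
    exact hne (hr.dist_eq_zero_iff.mp hdz)
  have h1 : (doubleGraph G).dist (v, a) (v, b) ≠ 1 := by
    intro h
    rw [SimpleGraph.dist_eq_one_iff_adj] at h
    exact G.loopless.irrefl v h
  omega

lemma ecc_doubleGraph [Fintype V] (hconn : G.Connected) (hV : 1 < Fintype.card V)
    (v : V) (a : Fin 2) :
    eccentricity (doubleGraph G) (v, a) = max (eccentricity G v) 2 := by
  classical
  apply le_antisymm
  · apply Finset.sup_le
    rintro ⟨u, b⟩ -
    by_cases h : u = v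
    · subst h
      by_cases hb : b = a
      · subst hb; simp [SimpleGraph.dist_self]
      · rw [dist_doubleGraph_self G hconn hV u (Ne.symm hb)]
        exact le_max_right _ _
    · rw [dist_doubleGraph_ne G hconn (Ne.symm h) a b]
      exact le_trans (Finset.le_sup (Finset.mem_univ u)) (le_max_left _ _)
  · apply max_le
    · apply Finset.sup_le
      intro u _
      by_cases h : u = v
      · subst h; simp [SimpleGraph.dist_self]
      · rw [← dist_doubleGraph_ne G hconn (Ne.symm h) a a]
        exact Finset.le_sup (Finset.mem_univ (u, a))
    · calc (2 : ℕ) = (doubleGraph G).dist (v, a) (v, a + 1) :=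
            (dist_doubleGraph_self G hconn hV v
              (show a ≠ a + 1 by fin_cases a <;> decide)).symm
        _ ≤ _ := Finset.le_sup (Finset.mem_univ (v, a + 1))

lemma ecc_pos [Fintype V] (hconn : G.Connected) (hV : 1 < Fintype.card V) (v : V) :
    1 ≤ eccentricity G v := by
  have : Nontrivial V := Fintype.one_lt_card_iff_nontrivial.mp hV
  obtain ⟨u, hu⟩ := exists_ne v
  calc 1 ≤ G.dist v u := hconn.pos_dist_of_ne (Ne.symm hu)
    _ ≤ _ := Finset.le_sup (Finset.mem_univ u)

lemma ecc_eq_one_iff [Fintype V] (hconn : G.Connected) (hV : 1 < Fintype.card V) (v : V) :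
    eccentricity G v = 1 ↔ ∀ u, u ≠ v → G.Adj v u := by
  constructor
  · intro h u hu
    have h1 : G.dist v u ≤ 1 := h ▸ Finset.le_sup (Finset.mem_univ u)
    have h2 : 1 ≤ G.dist v u := hconn.pos_dist_of_ne (Ne.symm hu)
    exact SimpleGraph.dist_eq_one_iff_adj.mp (le_antisymm h1 h2)
  · intro h
    refine le_antisymm (Finset.sup_le fun u _ => ?_) (ecc_pos G hconn hV v)
    by_cases hu : u = v
    · subst hu; simp [SimpleGraph.dist_self]
    · exact le_of_eq (SimpleGraph.dist_eq_one_iff_adj.mpr (h u hu))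

lemma degree_eq_iff [Fintype V] [DecidableRel G.Adj] (v : V) :
    G.degree v = Fintype.card V - 1 ↔ ∀ u, u ≠ v → G.Adj v u := by
  classical
  have hsub : G.neighborFinset v ⊆ Finset.univ.erase v := by
    intro u hu
    rw [SimpleGraph.mem_neighborFinset] at hu
    exact Finset.mem_erase.mpr ⟨fun h => G.loopless.irrefl v (h ▸ hu), Finset.mem_univ u⟩
  have hcard : (Finset.univ.erase v).card = Fintype.card V - 1 := by
    rw [Finset.card_erase_of_mem (Finset.mem_univ v), Finset.card_univ]
  constructor
  · intro h u hu
    have heq : G.neighborFinset v = Finset.univ.erase v :=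
      Finset.eq_of_subset_of_card_le hsub (by rw [hcard, ← h]; rfl)
    have : u ∈ G.neighborFinset v := heq ▸ Finset.mem_erase.mpr ⟨hu, Finset.mem_univ u⟩
    rwa [SimpleGraph.mem_neighborFinset] at this
  · intro h
    have heq : G.neighborFinset v = Finset.univ.erase v := by
      apply Finset.Subset.antisymm hsub
      intro u hu
      rw [SimpleGraph.mem_neighborFinset]
      exact h u (Finset.mem_erase.mp hu).1
    rw [SimpleGraph.degree, heq, hcard]

lemma degree_doubleGraph [Fintype V] (v : V) (a : Fin 2)
    [Fintype ((doubleGraph G).neighborSet (v, a))] [Fintype (G.neighborSet v)] :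
    (doubleGraph G).degree (v, a) = 2 * G.degree v := by
  rw [← SimpleGraph.card_neighborSet_eq_degree, ← SimpleGraph.card_neighborSet_eq_degree]
  have e : ((doubleGraph G).neighborSet (v, a)) ≃ (G.neighborSet v) × Fin 2 :=
    { toFun := fun x => (⟨x.1.1, x.2⟩, x.1.2)
      invFun := fun p => ⟨(p.1.1, p.2), p.1.2⟩
      left_inv := fun x => rfl
      right_inv := fun p => rfl }
  rw [Fintype.card_congr e, Fintype.card_prod, Fintype.card_fin]
  ring

end Aux

/-- The connective eccentric index of the double graph:
`C^ξ(G*) = 4 C^ξ(G) − 2(n−1)‖n−1‖_G`. -/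
theorem connEccIndex_doubleGraph {V : Type*} [Fintype V] (G : SimpleGraph V)
    (hconn : G.Connected) (n : ℕ) (hcard : Fintype.card V = n) (hn : 2 ≤ n) :
    connEccIndex (doubleGraph G) =
      4 * connEccIndex G - 2 * ((n : ℚ) - 1) * (numVerticesOfDegree G (n - 1) : ℚ) := by
  letI := Classical.decRel G.Adj
  letI := Classical.decRel (doubleGraph G).Adj
  have hV : 1 < Fintype.card V := by omega
  have key : ∀ v : V, ∑ a : Fin 2,
      ((doubleGraph G).degree (v, a) : ℚ) / (eccentricity (doubleGraph G) (v, a))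
      = 4 * (G.degree v : ℚ) / (eccentricity G v)
        - (if G.degree v = n - 1 then 2 * ((n : ℚ) - 1) else 0) := by
    intro v
    have hdeg : ∀ a : Fin 2, ((doubleGraph G).degree (v, a) : ℚ) = 2 * G.degree v := by
      intro a
      exact_mod_cast degree_doubleGraph G v a
    have hecc : ∀ a : Fin 2,
        eccentricity (doubleGraph G) (v, a) = max (eccentricity G v) 2 :=
      fun a => ecc_doubleGraph G hconn hV v a
    have hecc1 : 1 ≤ eccentricity G v := ecc_pos G hconn hV v
    have hiff : eccentricity G v = 1 ↔ G.degree v = n - 1 := by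
      rw [ecc_eq_one_iff G hconn hV v, ← hcard, degree_eq_iff]
    rw [Fin.sum_univ_two, hdeg 0, hdeg 1, hecc 0, hecc 1]
    by_cases h1 : eccentricity G v = 1
    · have hd : G.degree v = n - 1 := hiff.mp h1
      rw [h1, if_pos hd, hd]
      have hcast : ((n - 1 : ℕ) : ℚ) = (n : ℚ) - 1 := by
        have : (1 : ℕ) ≤ n := by omega
        push_cast [Nat.cast_sub this]
        ring
      rw [hcast]
      norm_num
      ring
    · have h2 : 2 ≤ eccentricity G v := by omega
      rw [if_neg (fun hd => h1 (hiff.mpr hd)), max_eq_left h2]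
      have : (eccentricity G v : ℚ) ≠ 0 := by
        exact_mod_cast (by omega : eccentricity G v ≠ 0)
      field_simp
      ring
  rw [connEccIndex, connEccIndex, numVerticesOfDegree]
  rw [Fintype.sum_prod_type]
  rw [Finset.sum_congr rfl fun v _ => key v]
  rw [Finset.sum_sub_distrib]
  have h1 : ∑ v : V, 4 * (G.degree v : ℚ) / (eccentricity G v)
      = 4 * ∑ v : V, (G.degree v : ℚ) / (eccentricity G v) := by
    rw [Finset.mul_sum]
    congr 1
    ext v
    ring
  have h2 : ∑ v : V, (if G.degree v = n - 1 then 2 * ((n : ℚ) - 1) else 0)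
      = 2 * ((n : ℚ) - 1) * ((Finset.univ.filter fun v => G.degree v = n - 1).card : ℚ) := by
    rw [← Finset.sum_filter, Finset.sum_const, nsmul_eq_mul]
    ring
  rw [h1, h2]
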